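/- Let L be a language over a finite alphabet Σ accepted by a deterministic automaton A = (Q, q₀, Σ, δ, F) (the set of states Q may be infinite). If there exist an accessible state q and words u, v with δ(q, u) = q, δ(q, v) = q, uv ≠ vu, some prefix u' of u with δ(q, u') ∈ F and some prefix v' of v with δ(q, v') ∈ F (two distinct cycles based at q, each passing through a final state), then the set L_∞ of infinite words with infinitely many prefixes in L is uncountable and L is exponential. -/

import Mathlib

/-- The prefix of length `ℓ` of an infinite word `w : ℕ → A`. -/
def prefixOf {A : Type*} (w : ℕ → A) (ℓ : ℕ) : List A := List.ofFn (fun i : Fin ℓ => w i)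

/-- `Linf L` : infinite words having infinitely many finite prefixes in `L`. -/
def Linf {A : Type*} (L : Set (List A)) : Set (ℕ → A) :=
  {w | {n : ℕ | prefixOf w n ∈ L}.Infinite}

/-- Transition function of a deterministic automaton extended to words. -/
def deltaStar {Q A : Type*} (δ : Q → A → Q) (q : Q) (w : List A) : Q := w.foldl δ q

/-- A language `M` is exponential if the number of its words of length `n`
is at least `c·θⁿ` for some `θ > 1`, `c > 0` and infinitely many `n`. -/
def Exponential {A : Type*} (M : Set (List A)) : Prop :=
  ∃ θ : ℝ, 1 < θ ∧ ∃ c : ℝ, 0 < c ∧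
    ∀ N : ℕ, ∃ n : ℕ, N ≤ n ∧ c * θ ^ n ≤ ({w ∈ M | w.length = n}.ncard : ℝ)

namespace Stmt7Aux

variable {Γ : Type*}

/-- Block: depending on a bit, either `u++v` or `v++u`. -/
def blk (u v : List Γ) (b : Bool) : List Γ := if b then u ++ v else v ++ u

/-- `x` followed by `k` blocks determined by `s`. -/
def pref (x u v : List Γ) (s : ℕ → Bool) : ℕ → List Γ
  | 0 => x
  | k + 1 => pref x u v s k ++ blk u v (s k)

lemma blk_length (u v : List Γ) (b : Bool) : (blk u v b).length = u.length + v.length := by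
  cases b <;> simp [blk] <;> omega

lemma pref_length (x u v : List Γ) (s : ℕ → Bool) (k : ℕ) :
    (pref x u v s k).length = x.length + k * (u.length + v.length) := by
  induction k with
  | zero => simp [pref]
  | succ k ih => simp [pref, ih, blk_length]; ring

lemma pref_mono (x u v : List Γ) (s : ℕ → Bool) {k l : ℕ} (h : k ≤ l) :
    pref x u v s k <+: pref x u v s l := by
  induction l with
  | zero => simp [Nat.le_zero.mp h]
  | succ l ih =>
    rcases Nat.eq_or_lt_of_le h with h' | h'
    · simp [h']
    · exact (ih (Nat.lt_succ_iff.mp h')).trans ⟨blk u v (s l), rfl⟩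

lemma pref_congr {x u v : List Γ} {s t : ℕ → Bool} {k : ℕ}
    (h : ∀ i, i < k → s i = t i) : pref x u v s k = pref x u v t k := by
  induction k with
  | zero => rfl
  | succ k ih =>
    simp only [pref]
    rw [ih (fun i hi => h i (Nat.lt_succ_of_lt hi)), h k (Nat.lt_succ_self k)]

/-- Recover the bits from the concatenation, assuming blocks are distinct. -/
lemma pref_inj {x u v : List Γ} (hne : u ++ v ≠ v ++ u) {s t : ℕ → Bool} {k : ℕ}
    (h : pref x u v s k = pref x u v t k) : ∀ i, i < k → s i = t i := by
  induction k with
  | zero => intro i hi; omega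
  | succ k ih =>
    simp only [pref] at h
    have hlen : (pref x u v s k).length = (pref x u v t k).length := by
      rw [pref_length, pref_length]
    obtain ⟨h1, h2⟩ := List.append_inj h hlen
    intro i hi
    rcases Nat.lt_succ_iff_lt_or_eq.mp hi with hi' | hi'
    · exact ih h1 i hi'
    · subst hi'
      cases hs : s i <;> cases ht : t i <;> simp_all [blk]

variable (d : Γ)

/-- The infinite word `x (blk s₀) (blk s₁) ⋯`. -/
def W (x u v : List Γ) (s : ℕ → Bool) (n : ℕ) : Γ := (pref x u v s (n + 1)).getD n d

lemma W_getD (x u v : List Γ) (hm : 1 ≤ u.length + v.length) (s : ℕ → Bool) {n k : ℕ}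
    (hn : n < (pref x u v s k).length) : W d x u v s n = (pref x u v s k).getD n d := by
  have hn1 : n < (pref x u v s (n + 1)).length := by
    rw [pref_length]; nlinarith
  rcases le_total (n + 1) k with h | h
  · have hp := pref_mono x u v s h
    rw [W, List.getD_eq_getElem _ _ hn1, List.getD_eq_getElem _ _ hn, hp.getElem hn1]
  · have hp := pref_mono x u v s h
    rw [W, List.getD_eq_getElem _ _ hn1, List.getD_eq_getElem _ _ hn, hp.getElem hn]

lemma prefixOf_W (x u v : List Γ) (hm : 1 ≤ u.length + v.length) (s : ℕ → Bool) {ℓ k : ℕ}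
    (h : ℓ ≤ (pref x u v s k).length) :
    prefixOf (W d x u v s) ℓ = (pref x u v s k).take ℓ := by
  apply List.ext_getElem
  · simp [prefixOf, h]
  · intro i h1 h2
    have hi : i < ℓ := by simpa [prefixOf] using h1
    have hik : i < (pref x u v s k).length := lt_of_lt_of_le hi h
    simp only [prefixOf, List.getElem_ofFn, List.getElem_take]
    rw [W_getD d x u v hm s hik, List.getD_eq_getElem _ _ hik]

end Stmt7Aux

open Stmt7Aux in
theorem stmt_7 {Γ : Type*} [Fintype Γ] (L : Set (List Γ))
    {Q : Type*} (q0 : Q) (δ : Q → Γ → Q) (F : Set Q)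
    (hL : L = {w | deltaStar δ q0 w ∈ F})
    (hcyc : ∃ q : Q,
      (∃ x : List Γ, deltaStar δ q0 x = q) ∧
      ∃ u v : List Γ, deltaStar δ q u = q ∧ deltaStar δ q v = q ∧ u ++ v ≠ v ++ u ∧
        (∃ u' : List Γ, u' <+: u ∧ deltaStar δ q u' ∈ F) ∧
        (∃ v' : List Γ, v' <+: v ∧ deltaStar δ q v' ∈ F)) :
    ¬ (Linf L).Countable ∧ Exponential L := by
  obtain ⟨q, ⟨x, hx⟩, u, v, hu, hv, hne, ⟨u', hu'p, hu'F⟩, ⟨v', hv'p, hv'F⟩⟩ := hcyc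
  set m : ℕ := u.length + v.length with hmdef
  have huv_ne : u ++ v ≠ [] := by
    intro h
    exact hne (by simp [List.append_eq_nil_iff.mp h])
  have d : Γ := (u ++ v).head huv_ne
  have hm : 1 ≤ m := by
    rcases Nat.eq_zero_or_pos m with h | h
    · exfalso; apply huv_ne
      have : u.length = 0 ∧ v.length = 0 := by omega
      simp [List.length_eq_zero_iff.mp this.1, List.length_eq_zero_iff.mp this.2]
    · exact h
  -- after reading `x` and any sequence of blocks, the automaton is in state q
  have hdq : ∀ (s : ℕ → Bool) (k : ℕ), deltaStar δ q0 (pref x u v s k) = q := by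
    intro s k
    induction k with
    | zero => exact hx
    | succ k ih =>
      simp only [pref, deltaStar, List.foldl_append]
      cases hsk : s k <;>
        simp_all [blk, deltaStar, List.foldl_append]
  have hmemL : ∀ (s : ℕ → Bool) (k : ℕ) (w' : List Γ), deltaStar δ q w' ∈ F →
      pref x u v s k ++ w' ∈ L := by
    intro s k w' hF
    rw [hL]
    show List.foldl δ q0 (pref x u v s k ++ w') ∈ F
    rw [List.foldl_append]
    have h := hdq s k
    simp only [deltaStar] at h hF ⊢
    rw [h]; exact hF
  -- injectivity of W
  have hWinj : Function.Injective (W d x u v) := by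
    intro s t h
    funext i
    have hkey : ∀ k, pref x u v s k = pref x u v t k := by
      intro k
      have h1 := prefixOf_W d x u v hm s (k := k) (ℓ := (pref x u v s k).length) le_rfl
      have h2 := prefixOf_W d x u v hm t (k := k) (ℓ := (pref x u v t k).length) le_rfl
      have hlen : (pref x u v s k).length = (pref x u v t k).length := by
        rw [pref_length, pref_length]
      rw [List.take_length] at h1 h2
      rw [← h1, ← h2, hlen, h]
    exact pref_inj hne (hkey (i + 1)) i (Nat.lt_succ_self i)
  have hu'le : u'.length ≤ u.length := hu'p.length_le
  have hv'le : v'.length ≤ v.length := hv'p.length_le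
  -- prefixes of W s in L
  have hgen : ∀ (s : ℕ → Bool) (k : ℕ) (w' : List Γ), w' <+: blk u v (s k) →
      deltaStar δ q w' ∈ F →
      prefixOf (W d x u v s) (x.length + k * m + w'.length) ∈ L := by
    intro s k w' hp hF
    have hw'len : w'.length ≤ m := by
      have := hp.length_le
      rwa [blk_length] at this
    have hℓ : x.length + k * m + w'.length ≤ (pref x u v s (k + 1)).length := by
      rw [pref_length, ← hmdef]
      nlinarith
    rw [prefixOf_W d x u v hm s hℓ]
    have hplen : (pref x u v s k).length = x.length + k * m := by
      rw [pref_length, ← hmdef]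
    have htake : (pref x u v s (k + 1)).take (x.length + k * m + w'.length) =
        pref x u v s k ++ (blk u v (s k)).take w'.length := by
      show (pref x u v s k ++ blk u v (s k)).take _ = _
      rw [← hplen, List.take_append]
      simp
    rw [htake, ← List.prefix_iff_eq_take.mp hp]
    exact hmemL s k w' hF
  have hprefL : ∀ (s : ℕ → Bool) (k : ℕ), ∃ ℓ' : ℕ,
      prefixOf (W d x u v s) (x.length + k * m + ℓ') ∈ L := by
    intro s k
    cases hsk : s k
    · refine ⟨v'.length, hgen s k v' ?_ hv'F⟩
      rw [hsk]
      exact hv'p.trans (v.prefix_append u)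
    · refine ⟨u'.length, hgen s k u' ?_ hu'F⟩
      rw [hsk]
      exact hu'p.trans (u.prefix_append v)
  constructor
  · -- uncountability
    intro hc
    have hsub : Set.range (W d x u v) ⊆ Linf L := by
      rintro _ ⟨s, rfl⟩
      apply Set.infinite_of_not_bddAbove
      rintro ⟨b, hb⟩
      obtain ⟨ℓ', hmem⟩ := hprefL s (b + 1)
      have hle : x.length + (b + 1) * m + ℓ' ≤ b := hb hmem
      nlinarith
    have h1 : Countable (Set.range (W d x u v)) := (hc.mono hsub).to_subtype
    have h2 : Countable (ℕ → Bool) :=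
      Countable.of_equiv _ (Equiv.ofInjective _ hWinj).symm
    obtain ⟨f, hf⟩ := exists_surjective_nat (ℕ → Bool)
    obtain ⟨n, hn⟩ := hf (fun n => !(f n n))
    have := congrFun hn n
    simp at this
  · -- exponential
    refine ⟨(2 : ℝ) ^ ((m : ℝ)⁻¹), ?_, (2 : ℝ) ^ (-(x.length + u'.length : ℝ)), ?_, ?_⟩
    · rw [Real.one_lt_rpow_iff (by norm_num)]
      exact Or.inl ⟨one_lt_two, by positivity⟩
    · positivity
    · intro N
      set a : ℕ := x.length + u'.length with ha
      refine ⟨a + N * m, by nlinarith, ?_⟩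
      set n : ℕ := a + N * m with hn
      -- the injection from bit strings of length N
      set f : (Fin N → Bool) → List Γ :=
        fun σ => pref x u v (fun i => if h : i < N then σ ⟨i, h⟩ else false) N ++ u' with hf
      have hfinj : Function.Injective f := by
        intro σ τ h
        simp only [hf] at h
        have hlen : (pref x u v (fun i => if h : i < N then σ ⟨i, h⟩ else false) N).length
            = (pref x u v (fun i => if h : i < N then τ ⟨i, h⟩ else false) N).length := by
          rw [pref_length, pref_length]
        obtain ⟨h1, _⟩ := List.append_inj h hlen
        have := pref_inj hne h1
        funext i
        have := this i.1 i.2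
        simpa [i.2] using this
      have hfsub : Set.range f ⊆ {w ∈ L | w.length = n} := by
        rintro _ ⟨σ, rfl⟩
        refine ⟨hmemL _ N u' hu'F, ?_⟩
        simp only [hf, List.length_append, pref_length, hn, ha, ← hmdef]
        ring
      have hSfin : {w ∈ L | w.length = n}.Finite :=
        (List.finite_length_eq Γ n).subset (fun w hw => hw.2)
      have hcard : 2 ^ N ≤ {w ∈ L | w.length = n}.ncard := by
        have h1 : (Set.range f).ncard = 2 ^ N := by
          rw [← Nat.card_coe_set_eq, Nat.card_range_of_injective hfinj,
            Nat.card_eq_fintype_card]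
          simp
        calc 2 ^ N = (Set.range f).ncard := h1.symm
          _ ≤ {w ∈ L | w.length = n}.ncard := Set.ncard_le_ncard hfsub hSfin
      -- real arithmetic
      have hmR : (1 : ℝ) ≤ (m : ℝ) := by exact_mod_cast hm
      have hmpos : (0 : ℝ) < (m : ℝ) := by linarith
      have hθ : ((2 : ℝ) ^ ((m : ℝ)⁻¹)) ^ n = (2 : ℝ) ^ ((m : ℝ)⁻¹ * n) := by
        rw [← Real.rpow_natCast ((2 : ℝ) ^ ((m : ℝ)⁻¹)) n, ← Real.rpow_mul (by norm_num)]
      have hexp : (m : ℝ)⁻¹ * n - (x.length + u'.length : ℝ) ≤ (N : ℕ) := by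
        have hnr : (n : ℝ) = (x.length + u'.length : ℝ) + (N : ℝ) * (m : ℝ) := by
          push_cast [hn, ha]; ring
        rw [hnr]
        have h1 : (m:ℝ)⁻¹ * ((x.length + u'.length : ℝ) + (N : ℝ) * (m : ℝ))
            = (x.length + u'.length : ℝ) / m + N := by
          field_simp
        rw [h1]
        have h2 : (x.length + u'.length : ℝ) / m ≤ (x.length + u'.length : ℝ) := by
          rw [div_le_iff₀ hmpos]
          nlinarith [Nat.cast_nonneg (α := ℝ) x.length, Nat.cast_nonneg (α := ℝ) u'.length]
        linarith
      calc (2 : ℝ) ^ (-(x.length + u'.length : ℝ)) * ((2 : ℝ) ^ ((m : ℝ)⁻¹)) ^ n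
          = (2 : ℝ) ^ ((m : ℝ)⁻¹ * n - (x.length + u'.length : ℝ)) := by
            rw [hθ, ← Real.rpow_add (by norm_num)]; ring_nf
        _ ≤ (2 : ℝ) ^ ((N : ℝ)) :=
            Real.rpow_le_rpow_of_exponent_le one_le_two hexp
        _ = ((2 ^ N : ℕ) : ℝ) := by
            rw [Real.rpow_natCast]; push_cast; ring
        _ ≤ ({w ∈ L | w.length = n}.ncard : ℝ) := by exact_mod_cast hcard
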